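/- Over F_7, let F be the 2×6 matrix [[1,0,5,5,3,5],[0,1,5,6,0,3]] and G' the 2×6 matrix [[0,0,0,1,0,1],[0,0,1,0,3,3]]. Let P be the 6×2 matrix with columns (2,2,1,0,0,0)^T and (2,1,0,1,0,0)^T. Then F·P = 0 (the 2×2 zero matrix) and rank(G'·P) = 2. -/
import Mathlib


def F16 : Matrix (Fin 2) (Fin 6) (ZMod 7) := !![1, 0, 5, 5, 3, 5; 0, 1, 5, 6, 0, 3]
def G16 : Matrix (Fin 2) (Fin 6) (ZMod 7) := !![0, 0, 0, 1, 0, 1; 0, 0, 1, 0, 3, 3]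
def P16 : Matrix (Fin 6) (Fin 2) (ZMod 7) := !![2, 2; 2, 1; 1, 0; 0, 1; 0, 0; 0, 0]

/-- Example 2: the explicit encoding matrix satisfies `F·P = 0` and `rank(G'·P) = 2`. -/
theorem example2_encoding_matrix : F16 * P16 = 0 ∧ (G16 * P16).rank = 2 := by
  constructor
  · ext i j
    fin_cases i <;> fin_cases j <;>
      simp [F16, P16, Matrix.mul_apply, Fin.sum_univ_six] <;> decide
  · have h : G16 * P16 = !![0, 1; 1, 0] := by
      ext i j
      fin_cases i <;> fin_cases j <;>
        simp [G16, P16, Matrix.mul_apply, Fin.sum_univ_six] <;> decide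
    rw [h]
    haveI : Fact (Nat.Prime 7) := ⟨by norm_num⟩
    have hd : IsUnit (!![0, 1; 1, 0] : Matrix (Fin 2) (Fin 2) (ZMod 7)).det := by
      simp [Matrix.det_fin_two]
    have := Matrix.rank_of_isUnit (!![0, 1; 1, 0] : Matrix (Fin 2) (Fin 2) (ZMod 7))
      ((Matrix.isUnit_iff_isUnit_det _).mpr hd)
    simpa using this
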